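/- Let 𝕜 be a field and let 𝒱 be a 𝕜-vector space with an exhaustive, separated ascending ℤ-filtration (𝒱_i). Suppose λ : 𝕜ˣ → Aut(𝒱) is an action by filtered automorphisms that is rational (i.e. 𝒱 decomposes as a direct sum of λ-eigenspaces). Define the λ-twisted filtration by 𝒱^λ_k := ⊕_{i+j=k} { v ∈ 𝒱_i | λ(t)v = t^j v for all t }. Then the associated graded space of the λ-twisted filtration is canonically isomorphic to the λ-twist of the associated graded space: gr(𝒱^λ) = (gr 𝒱)^λ as graded vector spaces. -/

import Mathlib

open DirectSum

abbrev grPiece {𝕜 V : Type*} [Field 𝕜] [AddCommGroup V] [Module 𝕜 V]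
    (p q : Submodule 𝕜 V) : Type _ :=
  q ⧸ (p.comap q.subtype)

theorem auxKerQuot {𝕜 : Type*} [Field 𝕜] {ι M : Type*} (Q : ι → Type*)
    [∀ i, AddCommGroup (Q i)] [∀ i, Module 𝕜 (Q i)] [AddCommGroup M] [Module 𝕜 M]
    [DecidableEq ι] (f : M →ₗ[𝕜] ⨁ i, Q i) (hf : Function.Surjective f) :
    Nonempty ((M ⧸ LinearMap.ker f) ≃ₗ[𝕜] ⨁ i, Q i) :=
  ⟨f.quotKerEquivOfSurjective hf⟩

open DFinsupp in

theorem auxQuot {𝕜 V : Type*} [Field 𝕜] [AddCommGroup V] [Module 𝕜 V] {ι : Type*}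
    [DecidableEq ι] (A B : ι → Submodule 𝕜 V) (hBA : ∀ i, B i ≤ A i)
    (hind : iSupIndep A) :
    Nonempty (((⨆ i, A i : Submodule 𝕜 V) ⧸ ((⨆ i, B i : Submodule 𝕜 V).comap
        (⨆ i, A i : Submodule 𝕜 V).subtype)) ≃ₗ[𝕜]
      ⨁ i, ((A i) ⧸ ((B i).comap (A i).subtype))) := by
  classical
  set π : (Π₀ i, A i) →ₗ[𝕜] V := DFinsupp.lsum ℕ (fun i => (A i).subtype) with hπ
  have hπinj : Function.Injective π := (iSupIndep_iff_dfinsupp_lsum_injective A).mp hind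
  have hπrange : (⨆ i, A i : Submodule 𝕜 V) = LinearMap.range π :=
    Submodule.iSup_eq_range_dfinsupp_lsum A
  -- the equivalence S ≃ ⨆ A
  let e : (Π₀ i, A i) ≃ₗ[𝕜] (⨆ i, A i : Submodule 𝕜 V) :=
    (LinearEquiv.ofInjective π hπinj).trans (LinearEquiv.ofEq _ _ hπrange.symm)
  have he : ∀ x : Π₀ i, A i, ((e x : V)) = π x := fun x => rfl
  -- the quotient map S → T
  let f : (Π₀ i, A i) →ₗ[𝕜] ⨁ i, ((A i) ⧸ ((B i).comap (A i).subtype)) :=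
    DFinsupp.mapRange.linearMap (fun i => ((B i).comap (A i).subtype).mkQ)
  have hf_apply : ∀ (x : Π₀ i, A i) (i : ι),
      f x i = ((B i).comap (A i).subtype).mkQ (x i) := fun x i => rfl
  have fsingle : ∀ (i : ι) (a : A i), f (DFinsupp.single i a) =
      DFinsupp.single i (((B i).comap (A i).subtype).mkQ a) := by
    intro i a
    exact DFinsupp.mapRange_single (f := fun i => (((B i).comap (A i).subtype).mkQ :
      A i → (A i) ⧸ ((B i).comap (A i).subtype))) (hf := fun i => map_zero _)
  -- surjectivity of f
  have hfsurj : Function.Surjective f := by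
    intro y
    induction y using DFinsupp.induction with
    | h0 => exact ⟨0, map_zero f⟩
    | ha i b g hgi hb ih =>
      obtain ⟨x, hx⟩ := ih
      obtain ⟨a, ha⟩ := Submodule.mkQ_surjective _ b
      refine ⟨DFinsupp.single i a + x, ?_⟩
      rw [map_add, hx]
      congr 1
      rw [fsingle, ha]
  -- kernel description
  have hker : ∀ x : Π₀ i, A i, f x = 0 ↔ π x ∈ (⨆ i, B i : Submodule 𝕜 V) := by
    intro x
    constructor
    · intro hx
      have hx' : ∀ i, (x i : V) ∈ B i := by
        intro i
        have := congrArg (fun z => z i) hx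
        simp only [hf_apply] at this
        simpa [Submodule.Quotient.mk_eq_zero] using this
      have : π x = DFinsupp.sumAddHom (fun i => ((A i).subtype).toAddMonoidHom) x := by
        simp [hπ, DFinsupp.lsum_apply_apply]
      rw [this]
      exact dfinsuppSumAddHom_mem _ x _ fun i _ => le_iSup B i (hx' i)
    · intro hx
      obtain ⟨y, hy⟩ := (Submodule.mem_iSup_iff_exists_dfinsupp B (π x)).mp hx
      -- inclusion of ⨁ B into ⨁ A
      let incl : (Π₀ i, B i) →ₗ[𝕜] (Π₀ i, A i) :=
        DFinsupp.mapRange.linearMap (fun i => Submodule.inclusion (hBA i))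
      have hcomp : π.comp incl = DFinsupp.lsum ℕ (fun i => (B i).subtype) := by
        apply DFinsupp.lhom_ext
        intro i b
        have hsing : incl (DFinsupp.single i b) =
            DFinsupp.single i (Submodule.inclusion (hBA i) b) :=
          DFinsupp.mapRange_single (f := fun i => (Submodule.inclusion (hBA i) :
            B i → A i)) (hf := fun i => map_zero _)
        simp only [LinearMap.comp_apply, hsing]
        simp [hπ, DFinsupp.lsum_apply_apply]
      have hxy : x = incl y := by
        apply hπinj
        rw [← LinearMap.comp_apply, hcomp, hy]
      have : ∀ i, (x i : V) ∈ B i := by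
        intro i
        rw [hxy]
        have : incl y i = Submodule.inclusion (hBA i) (y i) := rfl
        rw [this]
        exact (y i).2
      refine DFinsupp.ext fun i => ?_
      simp only [hf_apply]
      simpa [Submodule.Quotient.mk_eq_zero] using this i
  -- assemble
  have hkermap : ((⨆ i, B i : Submodule 𝕜 V).comap
      (⨆ i, A i : Submodule 𝕜 V).subtype).map (e.symm : _ →ₗ[𝕜] _) = LinearMap.ker f := by
    ext x
    constructor
    · rintro ⟨w, hw, rfl⟩
      simp only [LinearMap.mem_ker]
      rw [hker]
      have h2 : π (e.symm w) = (w : V) := by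
        rw [← he (e.symm w)]
        simp
      rw [LinearEquiv.coe_coe, h2]
      simpa using hw
    · intro hx
      refine ⟨e x, ?_, by simp⟩
      have h3 : ((⨆ i, A i : Submodule 𝕜 V).subtype (e x)) = π x := he x
      rw [SetLike.mem_coe, Submodule.mem_comap, h3]
      exact (hker x).mp hx
  obtain ⟨q2⟩ := auxKerQuot _ f hfsurj
  exact ⟨(Submodule.Quotient.equiv _ _ e.symm hkermap).trans q2⟩

/-- Let `𝒱` be a filtered vector space (exhaustive, separated ascending `ℤ`-filtration
`F`) with a rational action `ρ` of `𝕜ˣ` by filtered automorphisms, i.e. `𝒱` is the direct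
sum of the eigenspaces `E j = {v | ρ(t)v = t^j v}`.  Define the `λ`-twisted filtration
`𝒱^λ_k = ⊕_{i+j=k} (F i ∩ E j)`.  Then in every degree `k` the associated graded of the
twisted filtration is isomorphic to the `λ`-twist of the associated graded:
`gr_k(𝒱^λ) ≅ ⊕_{i+j=k} (the j-eigenspace of gr_i 𝒱)`, the latter realised as
`⊕_i (F i ∩ E (k-i))/(F (i-1) ∩ E (k-i))`. -/
theorem stmt0 {𝕜 V : Type*} [Field 𝕜] [AddCommGroup V] [Module 𝕜 V]
    (F : ℤ → Submodule 𝕜 V) (hmono : Monotone F)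
    (hexh : ⨆ i, F i = ⊤) (hsep : ⨅ i, F i = ⊥)
    (ρ : 𝕜ˣ →* (V ≃ₗ[𝕜] V))
    (E : ℤ → Submodule 𝕜 V)
    (hE : ∀ (j : ℤ) (v : V), v ∈ E j ↔ ∀ t : 𝕜ˣ, ρ t v = ((t ^ j : 𝕜ˣ) : 𝕜) • v)
    (hfilt : ∀ (t : 𝕜ˣ) (i : ℤ), (F i).map (ρ t : V ≃ₗ[𝕜] V).toLinearMap = F i)
    (hrat : DirectSum.IsInternal E) :
    ∀ Fl : ℤ → Submodule 𝕜 V,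
      (∀ m : ℤ, Fl m = ⨆ i : ℤ, (F i ⊓ E (m - i))) →
      ∀ k : ℤ, Nonempty
        (grPiece (Fl (k-1)) (Fl k) ≃ₗ[𝕜]
          ⨁ i : ℤ, grPiece (F (i-1) ⊓ E (k-i)) (F i ⊓ E (k-i))) := by

  intro Fl hFl k
  have hB : Fl (k-1) = ⨆ i : ℤ, (F (i-1) ⊓ E (k - i)) := by
    rw [hFl (k-1)]
    have h1 : (fun i : ℤ => F i ⊓ E (k-1-i)) =
        fun i : ℤ => F ((i+1)-1) ⊓ E (k-(i+1)) := by
      funext i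
      have e1 : ((i:ℤ)+1)-1 = i := by ring
      have e2 : k-(i+1) = k-1-i := by ring
      rw [e1, e2]
    calc ⨆ i : ℤ, F i ⊓ E (k-1-i) = ⨆ i : ℤ, F ((i+1)-1) ⊓ E (k-(i+1)) := by rw [h1]
      _ = ⨆ j : ℤ, F (j-1) ⊓ E (k-j) :=
        Equiv.iSup_comp (g := fun j : ℤ => F (j-1) ⊓ E (k-j)) (Equiv.addRight (1:ℤ))
  have hindE : iSupIndep E := hrat.submodule_iSupIndep
  have hinj : Function.Injective (fun i : ℤ => k - i) := fun a b h => by dsimp at h; omega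
  have hind : iSupIndep (fun i : ℤ => F i ⊓ E (k - i)) :=
    (hindE.comp hinj).mono (fun i => inf_le_right)
  rw [hFl k, hB]
  exact auxQuot (fun i : ℤ => F i ⊓ E (k - i)) (fun i : ℤ => F (i-1) ⊓ E (k - i))
    (fun i => inf_le_inf (hmono (by omega : (i:ℤ)-1 ≤ i)) le_rfl) hind
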